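/- Let F₂ be the free group on two generators with word metric d. Let x₀, x₀', y ∈ F₂ satisfy d(x₀,y) + d(y,x₀') = d(x₀,x₀') (y lies on the geodesic from x₀ to x₀') and let r ≥ 1. Then there exists a finite family of pairs (y_j, r_j), j ∈ J, with |J| ≤ 4·(d(x₀,x₀') + 1), such that the flowers Fl_{x₀}(y_j, r_j) are pairwise disjoint, their union equals Fl_{x₀'}(y, r), and for every j one has d(x₀,y_j) + r_j ≥ d(x₀',y) + r − d(x₀,x₀'). -/

import Mathlib

/-- The left-invariant word metric on the free group on two generators. -/
def wordDist (g h : FreeGroup (Fin 2)) : ℕ := FreeGroup.norm (g⁻¹ * h)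

/-- The flower `Fl_x(y,r)`: the set of points at distance `r` from `y` whose geodesic to `x`
passes through `y`. -/
def flower (x y : FreeGroup (Fin 2)) (r : ℕ) : Set (FreeGroup (Fin 2)) :=
  {v | wordDist v y = r ∧ wordDist v x = r + wordDist y x}

namespace FD
open FreeGroup List

abbrev Λ := (Fin 2) × Bool
abbrev F := FreeGroup (Fin 2)

def flip' (x : Λ) : Λ := (x.1, !x.2)

@[simp] lemma flip'_flip' (x : Λ) : flip' (flip' x) = x := by cases x; simp [flip']

def Rr (x y : Λ) : Prop := y ≠ flip' x

lemma cancel_iff (x y : Λ) : (x.1 = y.1 ∧ x.2 = !y.2) ↔ y = flip' x := by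
  revert x y; decide

def IsRed (L : List Λ) : Prop := List.IsChain Rr L

lemma reduce_eq_self {L : List Λ} (h : IsRed L) : reduce L = L := by
  induction L with
  | nil => rfl
  | cons x L ih =>
    rw [IsRed, List.isChain_cons] at h
    rw [reduce.cons, ih h.2]
    cases L with
    | nil => rfl
    | cons y t =>
      have : ¬ (x.1 = y.1 ∧ x.2 = !y.2) := by
        rw [cancel_iff]; exact h.1 y rfl
      simp [this]

lemma isRed_reduce (L : List Λ) : IsRed (reduce L) := by
  induction L with
  | nil => exact List.isChain_nil
  | cons x L ih =>
    rw [reduce.cons]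
    rcases hL : reduce L with _ | ⟨y, t⟩
    · simp [IsRed]
    · rw [hL] at ih
      by_cases hc : x.1 = y.1 ∧ x.2 = !y.2
      · simpa [hc, IsRed] using (List.isChain_cons.1 ih).2
      · simp only [hc, if_false]
        rw [IsRed, List.isChain_cons]
        refine ⟨fun z hz => ?_, ih⟩
        simp only [List.head?_cons, Option.mem_some_iff] at hz
        subst hz
        intro hy
        exact hc ((cancel_iff x y).2 hy)

lemma isRed_iff {L : List Λ} : IsRed L ↔ reduce L = L :=
  ⟨reduce_eq_self, fun h => h ▸ isRed_reduce L⟩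

lemma isRed_toWord (v : F) : IsRed (toWord v) := by
  rw [isRed_iff]; exact reduce_toWord v

lemma toWord_mk_of_isRed {L : List Λ} (h : IsRed L) : (mk L).toWord = L := by
  rw [toWord_mk, reduce_eq_self h]

lemma norm_mk_of_isRed {L : List Λ} (h : IsRed L) : norm (mk L) = L.length := by
  rw [FreeGroup.norm, toWord_mk_of_isRed h]

lemma isRed_invRev {L : List Λ} (h : IsRed L) : IsRed (invRev L) := by
  rw [isRed_iff, reduce_invRev, reduce_eq_self h]

lemma invRev_eq (L : List Λ) : invRev L = (L.map flip').reverse := rfl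

lemma getLast?_invRev (L : List Λ) : (invRev L).getLast? = L.head?.map flip' := by
  rw [invRev_eq, List.getLast?_reverse, List.head?_map]


lemma norm_mul_of_junction {P Q : List Λ} (hP : IsRed P) (hQ : IsRed Q)
    (hj : ∀ x ∈ P.getLast?, ∀ y ∈ Q.head?, Rr x y) :
    FreeGroup.norm (mk P * mk Q) = P.length + Q.length := by
  rw [mul_mk]
  have : IsRed (P ++ Q) := List.isChain_append.2 ⟨hP, hQ, hj⟩
  rw [norm_mk_of_isRed this, List.length_append]

lemma norm_mul_add_two_le {P Q : List Λ} {x : Λ}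
    (hx : P.getLast? = some x) (hy : Q.head? = some (flip' x)) :
    FreeGroup.norm (mk P * mk Q) + 2 ≤ P.length + Q.length := by
  have hP : P = P.dropLast ++ [x] := by
    conv_lhs => rw [← List.dropLast_append_getLast? x hx]
  have hQ : Q = flip' x :: Q.tail := by
    conv_lhs => rw [← List.cons_head_tail (l := Q) (by intro h; rw [h] at hy; simp at hy)]
    congr 1
    have := List.head?_eq_head (l := Q) (by intro h; rw [h] at hy; simp at hy)
    rw [this] at hy
    exact Option.some_injective _ hy
  have hstep : Red.Step (P.dropLast ++ (x.1, x.2) :: (x.1, !x.2) :: Q.tail) (P.dropLast ++ Q.tail) :=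
    Red.Step.not
  have hmk : mk (P ++ Q) = mk (P.dropLast ++ Q.tail) := by
    apply reduce.exact
    apply reduce.Step.eq
    rw [show P ++ Q = P.dropLast ++ (x.1, x.2) :: (x.1, !x.2) :: Q.tail by
      conv_lhs => rw [hP, hQ]
      simp [flip']]
    exact hstep
  rw [mul_mk, hmk]
  calc FreeGroup.norm (mk (P.dropLast ++ Q.tail)) + 2
      ≤ (P.dropLast ++ Q.tail).length + 2 := by
        have := norm_mk_le (L₁ := P.dropLast ++ Q.tail) (α := Fin 2)
        omega
    _ ≤ P.length + Q.length := by
        rw [List.length_append]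
        have h1 : P.length = P.dropLast.length + 1 := by
          rw [hP]; simp
        have h2 : Q.length = Q.tail.length + 1 := by
          rw [hQ]; simp
        omega

lemma norm_mul_eq_iff {P Q : List Λ} (hP : IsRed P) (hQ : IsRed Q) :
    FreeGroup.norm (mk P * mk Q) = P.length + Q.length ↔
      (∀ x ∈ P.getLast?, ∀ y ∈ Q.head?, Rr x y) := by
  constructor
  · intro h
    by_contra hj
    push_neg at hj
    obtain ⟨x, hx, y, hy, hxy⟩ := hj
    rw [Rr, not_not] at hxy
    subst hxy
    have := norm_mul_add_two_le (Option.mem_def.1 hx) (Option.mem_def.1 hy)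
    omega
  · exact norm_mul_of_junction hP hQ

lemma norm_inv_mul_eq_iff (v w : F) :
    FreeGroup.norm (v⁻¹ * w) = FreeGroup.norm v + FreeGroup.norm w ↔
      (∀ a ∈ v.toWord.head?, ∀ b ∈ w.toWord.head?, b ≠ a) := by
  have hv : v = mk v.toWord := (mk_toWord).symm
  have hw : w = mk w.toWord := (mk_toWord).symm
  rw [show v⁻¹ * w = mk (invRev v.toWord) * mk w.toWord by conv_lhs => rw [hv, hw, inv_mk],
      show FreeGroup.norm v = v.toWord.length from rfl,
      show FreeGroup.norm w = w.toWord.length from rfl,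
      ← invRev_length (L₁ := v.toWord),
      norm_mul_eq_iff (isRed_invRev (isRed_toWord v)) (isRed_toWord w)]
  rw [getLast?_invRev]
  constructor
  · intro h a ha b hb
    have := h (flip' a) (by simp [Option.mem_def.1 ha]) b hb
    rw [Rr] at this
    simpa using this
  · intro h x hx b hb
    simp only [Option.mem_map] at hx
    obtain ⟨a, ha, rfl⟩ := hx
    rw [Rr, flip'_flip']
    exact h a ha b hb


lemma wordDist_eq (a b : F) : wordDist a b = FreeGroup.norm (a⁻¹ * b) := rfl

lemma wordDist_symm (a b : F) : wordDist a b = wordDist b a := by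
  rw [wordDist_eq, wordDist_eq, ← norm_inv_eq, mul_inv_rev, inv_inv]

lemma norm_toWord (v : F) : FreeGroup.norm v = v.toWord.length := rfl

lemma mem_target_iff (h v : F) (r : ℕ) :
    v ∈ flower h 1 r ↔
      (v.toWord.length = r ∧ ∀ a ∈ v.toWord.head?, ∀ b ∈ h.toWord.head?, b ≠ a) := by
  have e1 : wordDist v 1 = FreeGroup.norm v := by rw [wordDist_eq, mul_one, norm_inv_eq]
  have e2 : wordDist (1:F) h = FreeGroup.norm h := by rw [wordDist_eq, inv_one, one_mul]
  constructor
  · rintro ⟨h1, h2⟩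
    rw [e1] at h1
    refine ⟨h1, ?_⟩
    rw [← norm_inv_mul_eq_iff, ← wordDist_eq, h2, e2, h1, norm_toWord]
  · rintro ⟨h1, h2⟩
    have := (norm_inv_mul_eq_iff v h).2 h2
    rw [← wordDist_eq] at this
    exact ⟨by rw [e1, norm_toWord, h1], by rw [this, e2, norm_toWord, h1]⟩

section Piece

variable (g : F) (k : ℕ) (s : Λ)

lemma isRed_A (hk2 : k ≤ g.toWord.length)
    (hok3 : ∀ a, k ≠ 0 → g.toWord[k-1]? = some a → s ≠ flip' a) :
    IsRed (g.toWord.take k ++ [s]) := by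
  rw [IsRed, List.isChain_append]
  refine ⟨(isRed_toWord g).take k, List.isChain_singleton s, ?_⟩
  intro x hx y hy
  simp only [List.head?_cons, Option.mem_some_iff] at hy
  subst hy
  rcases Nat.eq_zero_or_pos k with hk0 | hk0
  · subst hk0; simp at hx
  · have hlt : k - 1 < k := by omega
    rw [List.getLast?_eq_getElem?, List.getElem?_take_of_lt (by
      rw [List.length_take]; omega)] at hx
    rw [List.length_take, Nat.min_eq_left hk2] at hx
    exact (hok3 x (by omega) (Option.mem_def.1 hx) : s ≠ flip' x)

lemma zinv_mul (hk2 : k ≤ g.toWord.length) :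
    (mk (g.toWord.take k ++ [s]))⁻¹ * g = mk (flip' s :: g.toWord.drop k) := by
  set G := g.toWord with hG
  have hg : g = mk (G.take k) * mk (G.drop k) := by
    rw [mul_mk, List.take_append_drop, hG, mk_toWord]
  have hz : mk (G.take k ++ [s]) = mk (G.take k) * mk [s] := by
    rw [mul_mk]
  calc (mk (G.take k ++ [s]))⁻¹ * g
      = (mk (G.take k) * mk [s])⁻¹ * (mk (G.take k) * mk (G.drop k)) := by
        rw [← hz, ← hg]
    _ = (mk [s])⁻¹ * mk (G.drop k) := by group
    _ = mk (flip' s :: G.drop k) := by rw [inv_mk, mul_mk]; rfl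

lemma isRed_zg (hk2 : k ≤ g.toWord.length)
    (hok1 : ∀ a, g.toWord[k]? = some a → s ≠ a) :
    IsRed (flip' s :: g.toWord.drop k) := by
  rw [IsRed, List.isChain_cons]
  refine ⟨?_, (isRed_toWord g).drop k⟩
  intro y hy
  rw [List.head?_eq_getElem?, List.getElem?_drop, Nat.add_zero] at hy
  have := hok1 y hy
  rw [Rr, flip'_flip']
  exact fun hc => this hc.symm

lemma dist_z_g (hk2 : k ≤ g.toWord.length)
    (hok1 : ∀ a, g.toWord[k]? = some a → s ≠ a) :
    wordDist (mk (g.toWord.take k ++ [s])) g = (g.toWord.length - k) + 1 := by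
  rw [wordDist_eq, zinv_mul g k s hk2, norm_mk_of_isRed (isRed_zg g k s hk2 hok1),
    List.length_cons, List.length_drop]

end Piece

lemma mem_piece_iff (g v : F) (r k : ℕ) (s : Λ) (hk1 : k < r) (hk2 : k ≤ g.toWord.length)
    (hok1 : ∀ a, g.toWord[k]? = some a → s ≠ a)
    (hok3 : ∀ a, k ≠ 0 → g.toWord[k-1]? = some a → s ≠ flip' a) :
    v ∈ flower g (mk (g.toWord.take k ++ [s])) (r - k - 1) ↔
      (v.toWord.length = r ∧ v.toWord.take (k+1) = g.toWord.take k ++ [s]) := by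
  set G := g.toWord with hG
  set A := G.take k ++ [s] with hA
  set z := mk A with hzdef
  have hAred : IsRed A := isRed_A g k s hk2 hok3
  have hAlen : A.length = k + 1 := by
    rw [hA, List.length_append, List.length_take, Nat.min_eq_left hk2]; rfl
  have hzg : z⁻¹ * g = mk (flip' s :: G.drop k) := zinv_mul g k s hk2
  have hzgred : IsRed (flip' s :: G.drop k) := isRed_zg g k s hk2 hok1
  have hzgw : (z⁻¹ * g).toWord = flip' s :: G.drop k := by
    rw [hzg, toWord_mk_of_isRed hzgred]
  constructor
  · rintro ⟨h1, h2⟩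
    set u := z⁻¹ * v with hu
    have hvz : v⁻¹ * z = u⁻¹ := by rw [hu]; group
    have hnu : FreeGroup.norm u = r - k - 1 := by
      rw [← norm_inv_eq, ← hvz, ← wordDist_eq, h1]
    have hvg : v⁻¹ * g = u⁻¹ * (z⁻¹ * g) := by rw [hu]; group
    have h2' : FreeGroup.norm (u⁻¹ * (z⁻¹ * g)) =
        FreeGroup.norm u + FreeGroup.norm (z⁻¹ * g) := by
      rw [← hvg, ← wordDist_eq, h2, hnu, wordDist_eq]
    have hheads := (norm_inv_mul_eq_iff u (z⁻¹ * g)).1 h2'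
    rw [hzgw] at hheads
    have hU : ∀ a ∈ u.toWord.head?, Rr s a := by
      intro a ha
      have := hheads a ha (flip' s) (by simp)
      exact fun hc => this hc.symm
    have hv : v = mk (A ++ u.toWord) := by
      rw [← mul_mk, mk_toWord, ← hzdef, hu]; group
    have hVred : IsRed (A ++ u.toWord) := by
      rw [IsRed, List.isChain_append]
      refine ⟨hAred, isRed_toWord u, ?_⟩
      intro x hx y hy
      rw [hA, List.getLast?_concat, Option.mem_some_iff] at hx
      subst hx
      exact hU y hy
    have hvw : v.toWord = A ++ u.toWord := by rw [hv, toWord_mk_of_isRed hVred]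
    have hulen : u.toWord.length = r - k - 1 := hnu
    constructor
    · rw [hvw, List.length_append, hAlen, hulen]; omega
    · rw [hvw, ← hAlen, List.take_left]
  · rintro ⟨hlen, htake⟩
    set U := v.toWord.drop (k+1) with hUdef
    have hV : v.toWord = A ++ U := by
      rw [hUdef, ← htake, List.take_append_drop]
    have hsplit := List.isChain_append.1 (hV ▸ isRed_toWord v)
    have hUred : IsRed U := hsplit.2.1
    have hjunc : ∀ y ∈ U.head?, Rr s y := by
      intro y hy
      exact hsplit.2.2 s (by rw [hA, List.getLast?_concat]; rfl) y hy
    have hUlen : U.length = r - k - 1 := by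
      rw [hUdef, List.length_drop, hlen]; omega
    have hv : v = z * mk U := by
      rw [hzdef, mul_mk, ← hV, mk_toWord]
    have hnu : FreeGroup.norm (mk U) = r - k - 1 := by
      rw [norm_mk_of_isRed hUred, hUlen]
    constructor
    · rw [wordDist_eq, hv]
      have : (z * mk U)⁻¹ * z = (mk U)⁻¹ := by group
      rw [this, norm_inv_eq, hnu]
    · rw [wordDist_eq, hv]
      have : (z * mk U)⁻¹ * g = (mk U)⁻¹ * (z⁻¹ * g) := by group
      rw [this]
      have hUw : (mk U).toWord = U := toWord_mk_of_isRed hUred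
      have : FreeGroup.norm ((mk U)⁻¹ * (z⁻¹ * g)) =
          FreeGroup.norm (mk U) + FreeGroup.norm (z⁻¹ * g) := by
        rw [norm_inv_mul_eq_iff]
        intro a ha b hb
        rw [hUw] at ha
        rw [hzgw] at hb
        simp only [List.head?_cons, Option.mem_some_iff] at hb
        subst hb
        exact fun hc => (hjunc a ha) hc.symm
      rw [this, hnu, wordDist_eq]
  
lemma mem_single_iff (g v : F) (r : ℕ) :
    v ∈ flower g (mk (g.toWord.take r)) 0 ↔ v.toWord = g.toWord.take r := by
  have hred : IsRed (g.toWord.take r) := (isRed_toWord g).take r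
  constructor
  · rintro ⟨h1, _⟩
    rw [wordDist_eq] at h1
    have : v⁻¹ * mk (g.toWord.take r) = 1 := FreeGroup.norm_eq_zero.1 h1
    have hv : v = mk (g.toWord.take r) := by
      have := congrArg (v * ·) this
      simpa [mul_assoc] using this.symm
    rw [hv, toWord_mk_of_isRed hred]
  · intro hw
    have hv : v = mk (g.toWord.take r) := by
      rw [← mk_toWord (x := v), hw]
    subst hv
    constructor
    · rw [wordDist_eq]
      exact FreeGroup.norm_eq_zero.2 (inv_mul_cancel _)
    · rw [Nat.zero_add]

lemma dist_g_take (g : F) (r : ℕ) :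
    wordDist g (mk (g.toWord.take r)) = g.toWord.length - r := by
  rw [wordDist_symm, wordDist_eq]
  set G := g.toWord with hG
  have hg : g = mk (G.take r) * mk (G.drop r) := by
    rw [mul_mk, List.take_append_drop, hG, mk_toWord]
  have : (mk (G.take r))⁻¹ * g = mk (G.drop r) := by
    calc (mk (G.take r))⁻¹ * g = (mk (G.take r))⁻¹ * (mk (G.take r) * mk (G.drop r)) := by
          rw [← hg]
      _ = mk (G.drop r) := by group
  rw [this, norm_mk_of_isRed ((isRed_toWord g).drop r), List.length_drop]


/-! ### The combinatorial construction -/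

def okB (G H : List Λ) (k : ℕ) (s : Λ) : Bool :=
  decide (G[k]? ≠ some s) &&
    (if k = 0 then decide (H.head? ≠ some s) else decide (G[k-1]?.map flip' ≠ some s))

lemma okB_true_iff {G H : List Λ} {k : ℕ} {s : Λ} : okB G H k s = true ↔
    (G[k]? ≠ some s ∧ (k = 0 → H.head? ≠ some s) ∧
      (k ≠ 0 → G[k-1]?.map flip' ≠ some s)) := by
  rw [okB]
  by_cases hk : k = 0 <;> simp [hk] <;> tauto

def allS : List Λ := [((0:Fin 2),true),((0:Fin 2),false),((1:Fin 2),true),((1:Fin 2),false)]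

lemma mem_allS (x : Λ) : x ∈ allS := by
  rcases x with ⟨a, b⟩
  fin_cases a <;> fin_cases b <;> decide

lemma nodup_allS : allS.Nodup := by decide

def pairs (G H : List Λ) (r : ℕ) : List (ℕ × Λ) :=
  (List.range (min r (G.length+1))).flatMap fun k =>
    ((allS.filter (okB G H k)).map fun s => (k, s))

def items (G H : List Λ) (r : ℕ) : List (F × ℕ) :=
  ((pairs G H r).map fun p => (mk (G.take p.1 ++ [p.2]), r - p.1 - 1)) ++
    (if r ≤ G.length then [(mk (G.take r), 0)] else [])

lemma mem_pairs {G H : List Λ} {r : ℕ} {p : ℕ × Λ} :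
    p ∈ pairs G H r ↔ p.1 < min r (G.length+1) ∧ okB G H p.1 p.2 = true := by
  rcases p with ⟨k, s⟩
  simp only [pairs, List.mem_flatMap, List.mem_range, List.mem_map, List.mem_filter,
    Prod.mk.injEq]
  constructor
  · rintro ⟨a, ha, s', ⟨_, hok⟩, rfl, rfl⟩
    exact ⟨ha, hok⟩
  · rintro ⟨hk, hok⟩
    exact ⟨k, hk, s, ⟨mem_allS s, hok⟩, rfl, rfl⟩

lemma okB_hok1 {G H : List Λ} {k : ℕ} {s : Λ} (h : okB G H k s = true) :
    ∀ a, G[k]? = some a → s ≠ a := by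
  intro a ha hsa
  subst hsa
  exact (okB_true_iff.1 h).1 ha

lemma okB_hok3 {G H : List Λ} {k : ℕ} {s : Λ} (h : okB G H k s = true) :
    ∀ a, k ≠ 0 → G[k-1]? = some a → s ≠ flip' a := by
  intro a hk ha hs
  exact (okB_true_iff.1 h).2.2 hk (by rw [ha]; simp [hs])

lemma nodup_pairs {G H : List Λ} {r : ℕ} : (pairs G H r).Nodup := by
  rw [pairs, List.nodup_flatMap]
  constructor
  · intro k _
    exact ((nodup_allS.filter _).map (fun s s' hss => by
      simpa using congrArg Prod.snd hss))
  · have := List.pairwise_lt_range (n := min r (G.length+1))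
    refine this.imp ?_
    intro a b hab
    intro x hx hx'
    rcases x with ⟨k, s⟩
    rename' hx => hk, hx' => hk'
    simp only [List.mem_map] at hk hk'
    obtain ⟨s1, _, h1⟩ := hk
    obtain ⟨s2, _, h2⟩ := hk'
    have e1 := congrArg Prod.fst h1
    have e2 := congrArg Prod.fst h2
    simp at e1 e2
    omega

/-! ### getElem extraction lemmas -/

lemma getElem?_of_take_eq {V G : List Λ} {k : ℕ} {s : Λ} (hk2 : k ≤ G.length)
    (htake : V.take (k+1) = G.take k ++ [s]) : V[k]? = some s := by
  have h := congrArg (fun l => l[k]?) htake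
  rw [List.getElem?_take_of_succ] at h
  rw [h, List.getElem?_append_right (by rw [List.length_take]; omega)]
  simp [List.length_take, Nat.min_eq_left hk2]

lemma getElem?_agree {V G : List Λ} {k k' : ℕ} {s' : Λ} (hk'2 : k' ≤ G.length)
    (hkk' : k < k') (htake' : V.take (k'+1) = G.take k' ++ [s']) : V[k]? = G[k]? := by
  have h := congrArg (fun l => l[k]?) htake'
  rw [List.getElem?_take_of_lt (by omega)] at h
  rw [h, List.getElem?_append_left (by rw [List.length_take]; omega),
    List.getElem?_take_of_lt hkk']

/-! ### Disjointness -/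

lemma not_mem_both {G H : List Λ} {k k' : ℕ} {s s' : Λ} {V : List Λ}
    (hk'2 : k' ≤ G.length) (hkk' : k < k') (hok : okB G H k s = true)
    (htake : V.take (k+1) = G.take k ++ [s])
    (htake' : V.take (k'+1) = G.take k' ++ [s']) : False := by
  have h1 : V[k]? = some s := getElem?_of_take_eq (by omega) htake
  have h2 : V[k]? = G[k]? := getElem?_agree hk'2 hkk' htake'
  exact (okB_true_iff.1 hok).1 (by rw [← h2, h1])

section WithG

variable (g : F) (H : List Λ) (r : ℕ)

lemma disj_piece_piece {p q : ℕ × Λ} (hp : p ∈ pairs g.toWord H r)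
    (hq : q ∈ pairs g.toWord H r) (hne : p ≠ q) :
    Disjoint (flower g (mk (g.toWord.take p.1 ++ [p.2])) (r - p.1 - 1))
      (flower g (mk (g.toWord.take q.1 ++ [q.2])) (r - q.1 - 1)) := by
  rcases p with ⟨k, s⟩
  rcases q with ⟨k', s'⟩
  obtain ⟨hk, hok⟩ := mem_pairs.1 hp
  obtain ⟨hk', hok'⟩ := mem_pairs.1 hq
  rw [Set.disjoint_left]
  intro v hv hv'
  obtain ⟨hlen, htake⟩ := (mem_piece_iff g v r k s (by omega) (by omega)
    (okB_hok1 hok) (okB_hok3 hok)).1 hv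
  obtain ⟨hlen', htake'⟩ := (mem_piece_iff g v r k' s' (by omega) (by omega)
    (okB_hok1 hok') (okB_hok3 hok')).1 hv'
  rcases lt_trichotomy k k' with h | h | h
  · exact not_mem_both (by omega) h hok htake htake'
  · subst h
    apply hne
    have h1 : v.toWord[k]? = some s := getElem?_of_take_eq (by omega) htake
    have h2 : v.toWord[k]? = some s' := getElem?_of_take_eq (by omega) htake'
    rw [h1] at h2
    simp at h2
    rw [h2]
  · exact not_mem_both (by omega) h hok' htake' htake

lemma disj_piece_single {p : ℕ × Λ} (hp : p ∈ pairs g.toWord H r) (hrG : r ≤ g.toWord.length) :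
    Disjoint (flower g (mk (g.toWord.take p.1 ++ [p.2])) (r - p.1 - 1))
      (flower g (mk (g.toWord.take r)) 0) := by
  rcases p with ⟨k, s⟩
  obtain ⟨hk, hok⟩ := mem_pairs.1 hp
  rw [Set.disjoint_left]
  intro v hv hv'
  obtain ⟨hlen, htake⟩ := (mem_piece_iff g v r k s (by omega) (by omega)
    (okB_hok1 hok) (okB_hok3 hok)).1 hv
  have hV := (mem_single_iff g v r).1 hv'
  have h1 : v.toWord[k]? = some s := getElem?_of_take_eq (by omega) htake
  have h2 : v.toWord[k]? = g.toWord[k]? := by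
    rw [hV, List.getElem?_take_of_lt (by omega)]
  exact (okB_true_iff.1 hok).1 (by rw [← h2, h1])

lemma pairwise_disjoint_items :
    List.Pairwise (fun p q : F × ℕ => Disjoint (flower g p.1 p.2) (flower g q.1 q.2))
      (items g.toWord H r) := by
  rw [items, List.pairwise_append]
  refine ⟨?_, ?_, ?_⟩
  · rw [List.pairwise_map]
    refine List.Pairwise.imp_of_mem ?_ nodup_pairs
    intro p q hp hq hne
    exact disj_piece_piece g H r hp hq hne
  · split <;> simp
  · intro p hp q hq
    simp only [List.mem_map] at hp
    obtain ⟨p', hp', rfl⟩ := hp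
    by_cases hrG : r ≤ g.toWord.length
    · rw [if_pos hrG] at hq
      simp only [List.mem_singleton] at hq
      subst hq
      exact disj_piece_single g H r hp' hrG
    · rw [if_neg hrG] at hq
      simp at hq

/-! ### Union -/

lemma union_eq (hr : 1 ≤ r)
    (hGH : ∀ a ∈ g.toWord.head?, ∀ b ∈ H.head?, b ≠ a) (hH : H = (FreeGroup.mk H).toWord)
    (v : F) :
    (∃ q ∈ items g.toWord H r, v ∈ flower g q.1 q.2) ↔ v ∈ flower (FreeGroup.mk H) 1 r := by
  classical
  rw [mem_target_iff, ← hH]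
  constructor
  · rintro ⟨q, hq, hv⟩
    rw [items, List.mem_append] at hq
    rcases hq with hq | hq
    · -- piece case
      simp only [List.mem_map] at hq
      obtain ⟨⟨k, s⟩, hp, rfl⟩ := hq
      obtain ⟨hk, hok⟩ := mem_pairs.1 hp
      simp only at hk hok hv
      obtain ⟨hlen, htake⟩ := (mem_piece_iff g v r k s (by omega) (by omega)
        (okB_hok1 hok) (okB_hok3 hok)).1 hv
      refine ⟨hlen, ?_⟩
      intro a ha b hb hba
      subst hba
      rw [List.head?_eq_getElem?] at ha
      have hVk : v.toWord[k]? = some s := getElem?_of_take_eq (by omega) htake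
      rcases Nat.eq_zero_or_pos k with hk0 | hk0
      · subst hk0
        rw [hVk] at ha
        have : b = s := by simpa using ha.symm
        subst this
        exact (okB_true_iff.1 hok).2.1 rfl hb
      · have h0 : v.toWord[0]? = g.toWord[0]? := getElem?_agree (by omega) hk0 htake
        rw [h0] at ha
        exact hGH b (by rw [List.head?_eq_getElem?]; exact ha) b hb rfl
    · -- singleton case
      by_cases hrG : r ≤ g.toWord.length
      · rw [if_pos hrG, List.mem_singleton] at hq
        subst hq
        have hVw := (mem_single_iff g v r).1 hv
        have hlen : v.toWord.length = r := by
          rw [hVw, List.length_take]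
          omega
        refine ⟨hlen, ?_⟩
        intro a ha b hb hba
        subst hba
        rw [List.head?_eq_getElem?, hVw, List.getElem?_take_of_lt (by omega)] at ha
        exact hGH b (by rw [List.head?_eq_getElem?]; exact ha) b hb rfl
      · rw [if_neg hrG] at hq
        simp at hq
  · rintro ⟨hlen, hhead⟩
    by_cases hsing : v.toWord = g.toWord.take r
    · have hrG : r ≤ g.toWord.length := by
        have := congrArg List.length hsing
        rw [hlen, List.length_take] at this
        omega
      refine ⟨(mk (g.toWord.take r), 0), ?_, ?_⟩
      · rw [items, List.mem_append, if_pos hrG]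
        right
        simp
      · exact (mem_single_iff g v r).2 hsing
    · -- findGreatest
      set P : ℕ → Prop := fun k => v.toWord.take k = g.toWord.take k with hP
      set N := min (r-1) g.toWord.length with hN
      set k := Nat.findGreatest P N with hk
      have hPk : P k := by
        rw [hk]
        exact Nat.findGreatest_spec (P := P) (m := 0) (n := N) (Nat.zero_le N) (by simp [hP])
      have hkN : k ≤ N := by
        rw [hk]
        exact Nat.findGreatest_le (P := P) N
      have hkr : k < r := by omega
      have hkG : k ≤ g.toWord.length := by omega
      have hkV : k < v.toWord.length := by omega
      set s := v.toWord[k]'hkV with hs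
      have htake : v.toWord.take (k+1) = g.toWord.take k ++ [s] := by
        rw [List.take_succ, List.getElem?_eq_getElem hkV, ← hs, hPk]
        rfl
      have hok1 : g.toWord[k]? ≠ some s := by
        intro hGk
        have hkGlt : k < g.toWord.length := by
          rcases List.getElem?_eq_some_iff.1 hGk with ⟨hh, _⟩
          exact hh
        have hPk1 : P (k+1) := by
          rw [hP]
          simp only
          rw [htake, List.take_succ, hGk]
          rfl
        rcases Nat.lt_or_ge (k+1) r with hlt | hge
        · exact Nat.findGreatest_is_greatest (P := P) (n := N) (by omega) (by omega) hPk1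
        · have hkr1 : k + 1 = r := by omega
          apply hsing
          have hVfull : v.toWord.take (k+1) = v.toWord := by
            rw [hkr1, ← hlen, List.take_length]
          rw [← hVfull, hPk1, hkr1]
      have hok2 : k = 0 → H.head? ≠ some s := by
        intro hk0 hH0
        have : v.toWord.head? = some s := by
          rw [List.head?_eq_getElem?, ← hk0, List.getElem?_eq_getElem hkV, hs]
        exact hhead s this s hH0 rfl
      have hok3 : k ≠ 0 → g.toWord[k-1]?.map flip' ≠ some s := by
        intro hk0 hmap
        have hk1G : k - 1 < g.toWord.length := by omega
        rw [List.getElem?_eq_getElem hk1G] at hmap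
        have hsval : s = flip' (g.toWord[k-1]'hk1G) := by
          simpa using hmap.symm
        have hVG : v.toWord[k-1]? = g.toWord[k-1]? := by
          have h := congrArg (fun l => l[k-1]?) hPk
          rwa [List.getElem?_take_of_lt (by omega), List.getElem?_take_of_lt (by omega)] at h
        have e1 : v.toWord[k-1]'(by omega) = g.toWord[k-1]'hk1G := by
          rw [List.getElem?_eq_getElem (by omega : k - 1 < v.toWord.length),
            List.getElem?_eq_getElem hk1G] at hVG
          simpa using hVG
        have e2 : v.toWord[k-1+1]'(by omega) = s := by
          have h2 : v.toWord[k-1+1]? = v.toWord[k]? := by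
            rw [show k-1+1 = k from by omega]
          rw [List.getElem?_eq_getElem (by omega : k - 1 + 1 < v.toWord.length),
            List.getElem?_eq_getElem hkV] at h2
          rw [Option.some.injEq] at h2
          rw [h2, hs]
        have hchain := List.isChain_iff_getElem.1 (isRed_toWord v) (k-1) (by omega)
        rw [Rr] at hchain
        apply hchain
        rw [e2, e1, ← hsval]
      refine ⟨(mk (g.toWord.take k ++ [s]), r - k - 1), ?_, ?_⟩
      · rw [items, List.mem_append]
        left
        simp only [List.mem_map]
        refine ⟨(k, s), mem_pairs.2 ⟨by simp; omega, okB_true_iff.2 ⟨hok1, hok2, hok3⟩⟩, rfl⟩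
      · exact (mem_piece_iff g v r k s hkr hkG (fun a ha hsa => hok1 (by rw [ha, hsa]))
          (fun a hk0 ha hsa => hok3 hk0 (by rw [ha, hsa]; rfl))).2 ⟨hlen, htake⟩

end WithG


/-! ### Counting -/

lemma length_filter_le3 {G H : List Λ} {k : ℕ} (hk1 : 1 ≤ k) (hk2 : k ≤ G.length) :
    (allS.filter (okB G H k)).length ≤ 3 := by
  have hk1G : k - 1 < G.length := by omega
  have hfail : ¬ (okB G H k (flip' (G[k-1]'hk1G)) = true) := by
    intro hok
    exact (okB_true_iff.1 hok).2.2 (by omega) (by rw [List.getElem?_eq_getElem hk1G]; rfl)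
  have h4 : allS.length = 4 := rfl
  have := List.length_filter_lt_length_iff_exists.2 ⟨_, mem_allS _, hfail⟩
  omega

lemma sum_le {G H : List Λ} : ∀ M, M ≤ G.length + 1 →
    ((List.range M).map
      (fun k => ((allS.filter (okB G H k)).map (fun s => ((k:ℕ), s))).length)).sum
      ≤ 3 * M + 1 := by
  intro M
  induction M with
  | zero => simp
  | succ M ih =>
    intro hM
    rw [List.range_succ, List.map_append, List.sum_append]
    have h4 : ((allS.filter (okB G H M)).map (fun s => ((M:ℕ), s))).length ≤ 4 := by
      rw [List.length_map]
      have := List.length_filter_le (okB G H M) allS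
      have h4' : allS.length = 4 := rfl
      omega
    by_cases hM0 : M = 0
    · subst hM0
      simpa using h4
    · have h3 : ((allS.filter (okB G H M)).map (fun s => ((M:ℕ), s))).length ≤ 3 := by
        rw [List.length_map]
        exact length_filter_le3 (by omega) (by omega)
      have h2 := ih (by omega)
      simp only [List.map_cons, List.map_nil, List.sum_cons, List.sum_nil]
      omega

lemma items_length_le {G H : List Λ} {r : ℕ} (hr : 1 ≤ r) :
    (items G H r).length ≤ 4 * (G.length + H.length + 1) := by
  rw [items, List.length_append, List.length_map]
  have hp : (pairs G H r).length ≤ 3 * (min r (G.length + 1)) + 1 := by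
    rw [pairs, List.length_flatMap]
    exact sum_le (min r (G.length + 1)) (by omega)
  have hite : (if r ≤ G.length then
      [((mk (G.take r) : F), (0:ℕ))] else []).length ≤ 1 := by
    split <;> simp
  by_cases hrG : r ≤ G.length
  · have hb : (if r ≤ G.length then [((mk (G.take r) : F), (0:ℕ))] else []).length = 1 := by
      rw [if_pos hrG]; rfl
    have : min r (G.length + 1) = r := by omega
    omega
  · have hb : (if r ≤ G.length then [((mk (G.take r) : F), (0:ℕ))] else []).length = 0 := by
      rw [if_neg hrG]; rfl
    have : min r (G.length + 1) ≤ G.length + 1 := by omega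
    omega

/-! ### Distance inequality -/

lemma item_dist (g : F) (H : List Λ) (r : ℕ) :
    ∀ q ∈ items g.toWord H r,
      H.length + r ≤ wordDist g q.1 + q.2 + (g.toWord.length + H.length) := by
  intro q hq
  rw [items, List.mem_append] at hq
  rcases hq with hq | hq
  · simp only [List.mem_map] at hq
    obtain ⟨⟨k, s⟩, hp, rfl⟩ := hq
    obtain ⟨hk, hok⟩ := mem_pairs.1 hp
    simp only at hk hok ⊢
    have hd : wordDist g (mk (g.toWord.take k ++ [s])) = (g.toWord.length - k) + 1 := by
      rw [wordDist_symm]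
      exact dist_z_g g k s (by omega) (okB_hok1 hok)
    rw [hd]
    omega
  · by_cases hrG : r ≤ g.toWord.length
    · rw [if_pos hrG, List.mem_singleton] at hq
      subst hq
      rw [dist_g_take]
      simp only
      omega
    · rw [if_neg hrG] at hq
      simp at hq

/-! ### The core theorem (flower based at the identity) -/

theorem core (g h : F)
    (hgh : FreeGroup.norm g + FreeGroup.norm h = FreeGroup.norm (g⁻¹ * h)) (r : ℕ)
    (hr : 1 ≤ r) :
    ∃ (n : ℕ) (ys : Fin n → F) (rs : Fin n → ℕ),
      n ≤ 4 * (wordDist g h + 1) ∧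
      (∀ i j : Fin n, i ≠ j → Disjoint (flower g (ys i) (rs i)) (flower g (ys j) (rs j))) ∧
      (⋃ j : Fin n, flower g (ys j) (rs j)) = flower h 1 r ∧
      (∀ j : Fin n, wordDist h 1 + r ≤ wordDist g (ys j) + rs j + wordDist g h) := by
  have hGH : ∀ a ∈ g.toWord.head?, ∀ b ∈ h.toWord.head?, b ≠ a :=
    (norm_inv_mul_eq_iff g h).1 hgh.symm
  have hD : wordDist g h = g.toWord.length + h.toWord.length := by
    rw [wordDist_eq, ← hgh, norm_toWord, norm_toWord]
  have hH1 : wordDist h 1 = h.toWord.length := by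
    rw [wordDist_eq, mul_one, norm_inv_eq, norm_toWord]
  refine ⟨(items g.toWord h.toWord r).length,
    fun i => ((items g.toWord h.toWord r).get i).1,
    fun i => ((items g.toWord h.toWord r).get i).2, ?_, ?_, ?_, ?_⟩
  · rw [hD]
    exact items_length_le hr
  · intro i j hij
    have hp := List.pairwise_iff_get.1 (pairwise_disjoint_items g h.toWord r)
    rcases lt_or_gt_of_ne hij with hlt | hlt
    · exact hp i j hlt
    · exact (hp j i hlt).symm
  · ext v
    simp only [Set.mem_iUnion]
    have hu := union_eq g h.toWord r hr hGH (by rw [mk_toWord]) v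
    rw [mk_toWord] at hu
    rw [← hu]
    constructor
    · rintro ⟨j, hj⟩
      exact ⟨_, List.get_mem _ j, hj⟩
    · rintro ⟨q, hq, hvq⟩
      obtain ⟨i, rfl⟩ := List.mem_iff_get.1 hq
      exact ⟨i, hvq⟩
  · intro j
    rw [hH1, hD]
    exact item_dist g h.toWord r _ (List.get_mem _ j)

/-! ### Translation -/

lemma wordDist_mul_left (c a b : F) : wordDist (c*a) (c*b) = wordDist a b := by
  rw [wordDist_eq, wordDist_eq]
  congr 1
  group

lemma mem_flower_translate (c x z : F) (t : ℕ) (v : F) :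
    c * v ∈ flower (c*x) (c*z) t ↔ v ∈ flower x z t := by
  show (_ ∧ _) ↔ (_ ∧ _)
  rw [wordDist_mul_left, wordDist_mul_left, wordDist_mul_left]

lemma flower_translate (c x z : F) (t : ℕ) :
    flower (c*x) (c*z) t = (fun w => c*w) '' flower x z t := by
  ext v
  constructor
  · intro hv
    refine ⟨c⁻¹ * v, ?_, by group⟩
    rw [← mem_flower_translate c]
    have : c * (c⁻¹ * v) = v := by group
    rwa [this]
  · rintro ⟨w, hw, rfl⟩
    exact (mem_flower_translate c x z t w).2 hw

end FD

/-- **Flower decomposition under base change along the geodesic (Lafforgue (5.14)–(5.15)).**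
If `y` lies on the geodesic from `x₀` to `x₀'` and `r ≥ 1`, then the flower `Fl_{x₀'}(y,r)`
is the disjoint union of at most `4 (d(x₀,x₀') + 1)` flowers `Fl_{x₀}(y_j, r_j)` with
`d(x₀,y_j) + r_j ≥ d(x₀',y) + r − d(x₀,x₀')`. -/
theorem flower_decomposition (x₀ x₀' y : FreeGroup (Fin 2))
    (hy : wordDist x₀ y + wordDist y x₀' = wordDist x₀ x₀') (r : ℕ) (hr : 1 ≤ r) :
    ∃ (n : ℕ) (ys : Fin n → FreeGroup (Fin 2)) (rs : Fin n → ℕ),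
      n ≤ 4 * (wordDist x₀ x₀' + 1) ∧
      (∀ i j : Fin n, i ≠ j → Disjoint (flower x₀ (ys i) (rs i)) (flower x₀ (ys j) (rs j))) ∧
      (⋃ j : Fin n, flower x₀ (ys j) (rs j)) = flower x₀' y r ∧
      (∀ j : Fin n,
        wordDist x₀' y + r ≤ wordDist x₀ (ys j) + rs j + wordDist x₀ x₀') := by
  set g := y⁻¹ * x₀ with hg
  set h' := y⁻¹ * x₀' with hh'
  have e1 : wordDist x₀ y = FreeGroup.norm g := by
    rw [FD.wordDist_eq, ← FreeGroup.norm_inv_eq]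
    congr 1
    rw [hg]
    group
  have e2 : wordDist y x₀' = FreeGroup.norm h' := by
    rw [FD.wordDist_eq, hh']
  have e3 : wordDist x₀ x₀' = FreeGroup.norm (g⁻¹ * h') := by
    rw [FD.wordDist_eq]
    congr 1
    rw [hg, hh']
    group
  have hgh : FreeGroup.norm g + FreeGroup.norm h' = FreeGroup.norm (g⁻¹ * h') := by
    rw [← e1, ← e2, ← e3]
    exact hy
  obtain ⟨n, ys, rs, hcount, hdisj, hunion, hdist⟩ := FD.core g h' hgh r hr
  have hx₀ : x₀ = y * g := by rw [hg]; group
  have hx₀' : x₀' = y * h' := by rw [hh']; group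
  have hflower : ∀ (z : FreeGroup (Fin 2)) (t : ℕ),
      flower x₀ (y * z) t = (fun w => y * w) '' flower g z t := by
    intro z t
    rw [hx₀]
    exact FD.flower_translate y g z t
  have hdgh : wordDist g h' = wordDist x₀ x₀' := by
    rw [e3, FD.wordDist_eq]
  refine ⟨n, fun j => y * ys j, rs, ?_, ?_, ?_, ?_⟩
  · rwa [← hdgh]
  · intro i j hij
    rw [hflower, hflower]
    exact Set.disjoint_image_of_injective (mul_right_injective y) (hdisj i j hij)
  · calc (⋃ j, flower x₀ (y * ys j) (rs j))
        = ⋃ j, (fun w => y * w) '' flower g (ys j) (rs j) := by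
          simp only [hflower]
      _ = (fun w => y * w) '' ⋃ j, flower g (ys j) (rs j) := (Set.image_iUnion).symm
      _ = (fun w => y * w) '' flower h' 1 r := by rw [hunion]
      _ = flower (y * h') (y * 1) r := (FD.flower_translate y h' 1 r).symm
      _ = flower x₀' y r := by rw [← hx₀', mul_one]
  · intro j
    have hj := hdist j
    have eA : wordDist x₀' y = wordDist h' 1 := by
      rw [FD.wordDist_eq, FD.wordDist_eq, mul_one]
      have : x₀'⁻¹ * y = h'⁻¹ := by rw [hh']; group
      rw [this]
    have eB : wordDist x₀ (y * ys j) = wordDist g (ys j) := by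
      rw [hx₀, FD.wordDist_mul_left]
    rw [eA, eB, ← hdgh]
    exact hj
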